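/- Let X be a finite set with |X| = m ≥ 3, let k ≥ 2, and fix a ∈ X. Then the combinatorial Veronesian V(X,k) is isomorphic to V(X∖{a}, k) ⋊_∞ V(X, k−1), where ∞ maps each line e ∈ 𝔶_{<k}(X∖{a}) of V(X∖{a}, k) to the point e·a^{k−1−|e|} ∈ 𝔶_{k−1}(X) of V(X, k−1). -/
import Mathlib


/-- An incidence structure: a set of points, a set of lines (inside ambient types
`P` and `L`), and an incidence relation. -/
structure IncStr (P : Type*) (L : Type*) where
  pts : Set P
  lns : Set L
  inc : P → L → Prop

namespace IncStr

variable {P L P' L' : Type*}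

/-- Incidence only relates points of the structure with lines of the structure. -/
def Proper (K : IncStr P L) : Prop :=
  ∀ p l, K.inc p l → p ∈ K.pts ∧ l ∈ K.lns

/-- A partial linear space: two distinct points incident with two lines force the
lines to coincide. -/
def IsPLS (K : IncStr P L) : Prop :=
  K.Proper ∧
    ∀ a b A B, a ≠ b → K.inc a A → K.inc b A → K.inc a B → K.inc b B → A = B

/-- A subspace: whenever two distinct points of `H` are incident with a line, every
point incident with that line belongs to `H`. -/
def IsSubspace (K : IncStr P L) (H : Set P) : Prop :=
  H ⊆ K.pts ∧
    ∀ a b A, a ∈ H → b ∈ H → a ≠ b → K.inc a A → K.inc b A →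
      ∀ x, K.inc x A → x ∈ H

/-- A hyperplane: a proper subspace met by every line. -/
def IsHyperplane (K : IncStr P L) (H : Set P) : Prop :=
  K.IsSubspace H ∧ H ≠ K.pts ∧ ∀ A ∈ K.lns, ∃ x ∈ H, K.inc x A

/-- `L[H]`: the lines all of whose incident points lie in `H`. -/
def linesIn (K : IncStr P L) (H : Set P) : Set L :=
  {A ∈ K.lns | ∀ x, K.inc x A → x ∈ H}

/-- The restriction `K↾H`. -/
def restrict (K : IncStr P L) (H : Set P) : IncStr P L where
  pts := H
  lns := K.linesIn H
  inc := fun p l => K.inc p l ∧ p ∈ H ∧ l ∈ K.linesIn H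

/-- The reduct `K∖H`. -/
def reduct (K : IncStr P L) (H : Set P) : IncStr P L where
  pts := K.pts \ H
  lns := K.lns \ K.linesIn H
  inc := fun p l => K.inc p l ∧ p ∈ K.pts \ H ∧ l ∈ K.lns \ K.linesIn H

/-- The dual structure `K°`. -/
def dual (K : IncStr P L) : IncStr L P where
  pts := K.lns
  lns := K.pts
  inc := fun l p => K.inc p l

/-- The join `K₁ ⋊_∞ K₂` determined by a map `f = ∞` from (the ambient type of)
lines of `K₁` to points of `K₂`. -/
def join (K₁ K₂ : IncStr P L) (f : L → P) : IncStr P L where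
  pts := K₁.pts ∪ K₂.pts
  lns := K₁.lns ∪ K₂.lns
  inc := fun p l => K₁.inc p l ∨ K₂.inc p l ∨ (l ∈ K₁.lns ∧ p = f l)

/-- Condition (∗): a point of `K₁` incident with two lines of `K₁` having the same
image under `∞` forces the lines to coincide. -/
def StarCond (K₁ : IncStr P L) (f : L → P) : Prop :=
  ∀ x A B, K₁.inc x A → K₁.inc x B → f A = f B → A = B

/-- The rank of a point: the number of lines incident with it. -/
noncomputable def pointRank (K : IncStr P L) (p : P) : ℕ :=
  {l | K.inc p l}.ncard

/-- The size of a line: the number of points incident with it. -/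
noncomputable def lineSize (K : IncStr P L) (l : L) : ℕ :=
  {p | K.inc p l}.ncard

/-- A finite `(ν_ρ, β_κ)`-configuration. -/
def IsConfig (K : IncStr P L) (ν ρ β κ : ℕ) : Prop :=
  K.pts.Finite ∧ K.lns.Finite ∧ K.IsPLS ∧
  K.pts.ncard = ν ∧ K.lns.ncard = β ∧
  (∀ p ∈ K.pts, K.pointRank p = ρ) ∧
  (∀ l ∈ K.lns, K.lineSize l = κ)

/-- A binomial configuration of type `B(k,m)`. -/
def IsBinomial (K : IncStr P L) (k m : ℕ) : Prop :=
  K.IsConfig ((m + k - 1).choose k) k ((m + k - 1).choose m) m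

/-- `(fp, fl)` is an isomorphism of incidence structures: a pair of bijections
(on points and on lines) preserving and reflecting incidence. -/
def IsIso (K : IncStr P L) (K' : IncStr P' L') (fp : P → P') (fl : L → L') : Prop :=
  Set.BijOn fp K.pts K'.pts ∧ Set.BijOn fl K.lns K'.lns ∧
    ∀ p ∈ K.pts, ∀ l ∈ K.lns, (K.inc p l ↔ K'.inc (fp p) (fl l))

def Isomorphic (K : IncStr P L) (K' : IncStr P' L') : Prop :=
  ∃ fp fl, IsIso K K' fp fl

/-- A formally disjoint (tagged) copy of an incidence structure. -/
def tag (K : IncStr P L) (b : Bool) : IncStr (P × Bool) (L × Bool) where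
  pts := (fun p => (p, b)) '' K.pts
  lns := (fun l => (l, b)) '' K.lns
  inc := fun p l => K.inc p.1 l.1 ∧ p.2 = b ∧ l.2 = b

end IncStr

/-- The combinatorial Grassmannian `G(Y,k) = ⟨℘_k(Y), ℘_{k+1}(Y), ⊂⟩`. -/
def Gras {α : Type*} (Y : Finset α) (k : ℕ) : IncStr (Finset α) (Finset α) where
  pts := {a : Finset α | a ⊆ Y ∧ a.card = k}
  lns := {A : Finset α | A ⊆ Y ∧ A.card = k + 1}
  inc := fun a A => a ⊆ Y ∧ a.card = k ∧ A ⊆ Y ∧ A.card = k + 1 ∧ a ⊂ A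

/-- The combinatorial Veronesian `V(Y,k)`: points are multisets of size `k` with
elements in `Y`, lines are multisets of size `< k` with elements in `Y`, a point `f`
is incident with a line `e` iff `f = e·x^{k-|e|}` for some `x ∈ Y`. -/
def Ver {α : Type*} (Y : Finset α) (k : ℕ) : IncStr (Multiset α) (Multiset α) where
  pts := {f : Multiset α | (∀ x ∈ f, x ∈ Y) ∧ Multiset.card f = k}
  lns := {e : Multiset α | (∀ x ∈ e, x ∈ Y) ∧ Multiset.card e < k}
  inc := fun f e =>
    (∀ x ∈ f, x ∈ Y) ∧ Multiset.card f = k ∧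
    (∀ x ∈ e, x ∈ Y) ∧ Multiset.card e < k ∧
    ∃ x ∈ Y, f = e + Multiset.replicate (k - Multiset.card e) x

/-- for `|X| = m ≥ 3`, `k ≥ 2` and `a ∈ X`,
`V(X,k) ≅ V(X∖{a}, k) ⋊_∞ V(X, k-1)`, where `∞` maps each line
`e ∈ 𝔶_{<k}(X∖{a})` of `V(X∖{a}, k)` to the point `e·a^{k-1-|e|} ∈ 𝔶_{k-1}(X)`
of `V(X, k-1)` (the two summands are taken as formally disjoint tagged copies). -/
theorem statement15 {α : Type*} [Fintype α] [DecidableEq α] (m k : ℕ)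
    (hm : 3 ≤ m) (hk : 2 ≤ k) (hcard : Fintype.card α = m) (a : α) :
    IncStr.Isomorphic (Ver (Finset.univ : Finset α) k)
      (IncStr.join (IncStr.tag (Ver (Finset.univ.erase a) k) false)
        (IncStr.tag (Ver (Finset.univ : Finset α) (k - 1)) true)
        (fun e => (e.1 + Multiset.replicate (k - 1 - Multiset.card e.1) a, true))) := by
  classical
  set g : Multiset α → Multiset α × Bool :=
    fun f => if a ∈ f then (f.erase a, true) else (f, false) with hgdef
  set h : Multiset α × Bool → Multiset α :=
    fun p => if p.2 then a ::ₘ p.1 else p.1 with hhdef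
  have hk1 : 1 ≤ k := le_trans (by norm_num) hk
  refine ⟨g, g, ?_, ?_, ?_⟩
  · -- BijOn on points
    have mgt : Set.MapsTo g (Ver (Finset.univ : Finset α) k).pts
        (IncStr.join (IncStr.tag (Ver (Finset.univ.erase a) k) false)
        (IncStr.tag (Ver (Finset.univ : Finset α) (k - 1)) true)
        (fun e => (e.1 + Multiset.replicate (k - 1 - Multiset.card e.1) a, true))).pts := by
      rintro f ⟨h1, h2⟩
      by_cases haf : a ∈ f
      · right
        refine ⟨f.erase a, ⟨fun x hx => Finset.mem_univ x, ?_⟩, by simp [hgdef, haf]⟩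
        rw [Multiset.card_erase_of_mem haf, h2, Nat.pred_eq_sub_one]
      · left
        refine ⟨f, ⟨fun x hx => Finset.mem_erase.mpr ⟨?_, Finset.mem_univ x⟩, h2⟩,
          by simp [hgdef, haf]⟩
        rintro rfl; exact haf hx
    have mht : Set.MapsTo h
        (IncStr.join (IncStr.tag (Ver (Finset.univ.erase a) k) false)
        (IncStr.tag (Ver (Finset.univ : Finset α) (k - 1)) true)
        (fun e => (e.1 + Multiset.replicate (k - 1 - Multiset.card e.1) a, true))).pts
        (Ver (Finset.univ : Finset α) k).pts := by
      rintro p (⟨f, ⟨h1, h2⟩, rfl⟩ | ⟨f, ⟨h1, h2⟩, rfl⟩)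
      · exact ⟨fun x _ => Finset.mem_univ x, by simpa [hhdef] using h2⟩
      · refine ⟨fun x _ => Finset.mem_univ x, ?_⟩
        simp [hhdef, h2]; omega
    refine Set.InvOn.bijOn ⟨?_, ?_⟩ mgt mht
    · intro f hf
      by_cases haf : a ∈ f
      · simp [hgdef, hhdef, haf, Multiset.cons_erase haf]
      · simp [hgdef, hhdef, haf]
    · rintro p (⟨f, ⟨h1, h2⟩, rfl⟩ | ⟨f, ⟨h1, h2⟩, rfl⟩)
      · have haf : a ∉ f := fun hx => by
          simpa using Finset.mem_erase.mp (h1 a hx) |>.1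
        simp [hgdef, hhdef, haf]
      · simp [hgdef, hhdef]
  · -- BijOn on lines
    have mgt : Set.MapsTo g (Ver (Finset.univ : Finset α) k).lns
        (IncStr.join (IncStr.tag (Ver (Finset.univ.erase a) k) false)
        (IncStr.tag (Ver (Finset.univ : Finset α) (k - 1)) true)
        (fun e => (e.1 + Multiset.replicate (k - 1 - Multiset.card e.1) a, true))).lns := by
      rintro e ⟨h1, h2⟩
      by_cases hae : a ∈ e
      · right
        refine ⟨e.erase a, ⟨fun x hx => Finset.mem_univ x, ?_⟩, by simp [hgdef, hae]⟩
        rw [Multiset.card_erase_of_mem hae, Nat.pred_eq_sub_one]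
        have : 0 < Multiset.card e := Multiset.card_pos_iff_exists_mem.mpr ⟨a, hae⟩
        omega
      · left
        refine ⟨e, ⟨fun x hx => Finset.mem_erase.mpr ⟨?_, Finset.mem_univ x⟩, h2⟩,
          by simp [hgdef, hae]⟩
        rintro rfl; exact hae hx
    have mht : Set.MapsTo h
        (IncStr.join (IncStr.tag (Ver (Finset.univ.erase a) k) false)
        (IncStr.tag (Ver (Finset.univ : Finset α) (k - 1)) true)
        (fun e => (e.1 + Multiset.replicate (k - 1 - Multiset.card e.1) a, true))).lns
        (Ver (Finset.univ : Finset α) k).lns := by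
      rintro p (⟨e, ⟨h1, h2⟩, rfl⟩ | ⟨e, ⟨h1, h2⟩, rfl⟩)
      · exact ⟨fun x _ => Finset.mem_univ x, by simpa [hhdef] using h2⟩
      · refine ⟨fun x _ => Finset.mem_univ x, ?_⟩
        simp [hhdef]; omega
    refine Set.InvOn.bijOn ⟨?_, ?_⟩ mgt mht
    · intro e he
      by_cases hae : a ∈ e
      · simp [hgdef, hhdef, hae, Multiset.cons_erase hae]
      · simp [hgdef, hhdef, hae]
    · rintro p (⟨e, ⟨h1, h2⟩, rfl⟩ | ⟨e, ⟨h1, h2⟩, rfl⟩)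
      · have hae : a ∉ e := fun hx => by
          simpa using Finset.mem_erase.mp (h1 a hx) |>.1
        simp [hgdef, hhdef, hae]
      · simp [hgdef, hhdef]
  · -- incidence
    rintro f ⟨hf1, hf2⟩ e ⟨he1, he2⟩
    have hrep : ∀ x : α, a ∈ Multiset.replicate (k - Multiset.card e) x → x = a := by
      intro x hx
      exact (Multiset.eq_of_mem_replicate hx).symm
    by_cases haf : a ∈ f <;> by_cases hae : a ∈ e
    · -- a ∈ f, a ∈ e : K₂ incidence
      have hce : 1 ≤ Multiset.card e := Multiset.card_pos_iff_exists_mem.mpr ⟨a, hae⟩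
      simp only [IncStr.join, IncStr.tag, Ver, hgdef, haf, hae, hf2, he2,
        Multiset.card_erase_of_mem, Set.mem_image]
      simp [hf2, he2, Multiset.card_erase_of_mem, haf, hae]
      have hn : k - 1 - (Multiset.card e - 1) = k - Multiset.card e := by omega
      constructor
      · rintro ⟨x, rfl⟩
        refine ⟨by omega, x, ?_⟩
        rw [hn, Multiset.erase_add_left_pos _ hae]
      · rintro ⟨-, x, hx⟩
        refine ⟨x, ?_⟩
        have hf' : f = a ::ₘ (e.erase a + Multiset.replicate (k - Multiset.card e) x) := by
          rw [← hn, ← hx, Multiset.cons_erase haf]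
        rw [hf', ← Multiset.cons_add, Multiset.cons_erase hae]
    · -- a ∈ f, a ∉ e
      simp [IncStr.join, IncStr.tag, Ver, hgdef, haf, hae, hf2, he2,
        Multiset.card_erase_of_mem]
      have hsplit : e + Multiset.replicate (k - Multiset.card e) a
          = a ::ₘ (e + Multiset.replicate (k - 1 - Multiset.card e) a) := by
        rw [show k - Multiset.card e = (k - 1 - Multiset.card e) + 1 from by omega,
          Multiset.replicate_succ, Multiset.add_cons]
      constructor
      · rintro ⟨x, rfl⟩
        have hxa : x = a := by
          rcases Multiset.mem_add.mp haf with hx | hx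
          · exact absurd hx hae
          · exact (Multiset.eq_of_mem_replicate hx).symm
        subst hxa
        refine ⟨fun y hy hya => hae (hya ▸ hy), ?_⟩
        rw [hsplit, Multiset.erase_cons_head]
      · rintro ⟨-, hx⟩
        exact ⟨a, by rw [hsplit, ← hx, Multiset.cons_erase haf]⟩
    · -- a ∉ f, a ∈ e
      simp [IncStr.join, IncStr.tag, Ver, hgdef, haf, hae, hf2, he2,
        Multiset.card_erase_of_mem]
      rintro x rfl
      exact haf (Multiset.mem_add.mpr (Or.inl hae))
    · -- a ∉ f, a ∉ e
      simp [IncStr.join, IncStr.tag, Ver, hgdef, haf, hae, hf2, he2]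
      constructor
      · rintro ⟨x, rfl⟩
        have hxmem : x ∈ Multiset.replicate (k - Multiset.card e) x :=
          Multiset.mem_replicate.mpr ⟨by omega, rfl⟩
        have hxa : ¬ x = a := by
          rintro rfl
          exact haf (Multiset.mem_add.mpr (Or.inr hxmem))
        exact ⟨fun y hy hya => haf (hya ▸ hy), fun y hy hya => hae (hya ▸ hy), x, hxa, rfl⟩
      · rintro ⟨-, -, x, -, hx⟩
        exact ⟨x, hx⟩
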